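/- Let G : ℝ^m → ℝ be twice continuously differentiable on the nonnegative orthant, with ∂G/∂Y_j > 0 for all j and ∂²G/(∂Y_j ∂Y_k) ≤ 0 for all j ≠ k, and let Y have positive coordinates. Define ψ(S) = G(x^S ∘ Y) for S ⊆ {1,…,m}. Then ψ has decreasing marginal differences: for all A ⊆ B ⊆ {1,…,m} and j ∉ B, ψ(A ∪ {j}) − ψ(A) ≥ ψ(B ∪ {j}) − ψ(B). -/

import Mathlib

open Finset

/-- If `f` has derivative `f'` within a convex set `C` and the directional
derivative along `v` is nonpositive on `C`, then `f (x + v) ≤ f x`. -/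
lemma directional_nonpos_le {m : ℕ} (C : Set (Fin m → ℝ)) (hC : Convex ℝ C)
    (f : (Fin m → ℝ) → ℝ) (f' : (Fin m → ℝ) → ((Fin m → ℝ) →L[ℝ] ℝ))
    (hf : ∀ z ∈ C, HasFDerivWithinAt f (f' z) C z)
    (v : Fin m → ℝ) (hd : ∀ z ∈ C, f' z v ≤ 0)
    (x : Fin m → ℝ) (hx : x ∈ C) (hxv : x + v ∈ C) :
    f (x + v) ≤ f x := by
  set γ : ℝ → (Fin m → ℝ) := fun t => x + t • v with hγdef
  have hmem : ∀ t ∈ Set.Icc (0 : ℝ) 1, γ t ∈ C := by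
    intro t ht
    have := hC hx hxv (by linarith [ht.2] : (0:ℝ) ≤ 1 - t) ht.1 (by ring)
    convert this using 1
    simp [hγdef, smul_add]
    module
  have hγ : ∀ t : ℝ, HasDerivWithinAt γ v (Set.Icc (0:ℝ) 1) t := by
    intro t
    have h1 : HasDerivAt (fun t : ℝ => x + t • v) ((1:ℝ) • v) t :=
      ((hasDerivAt_id t).smul_const v).const_add x
    rw [one_smul] at h1
    exact h1.hasDerivWithinAt
  have hφ : ∀ t ∈ Set.Icc (0:ℝ) 1,
      HasDerivWithinAt (f ∘ γ) (f' (γ t) v) (Set.Icc (0:ℝ) 1) t := by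
    intro t ht
    exact (hf (γ t) (hmem t ht)).comp_hasDerivWithinAt t (hγ t) hmem
  have hanti : AntitoneOn (f ∘ γ) (Set.Icc (0:ℝ) 1) := by
    apply antitoneOn_of_hasDerivWithinAt_nonpos (convex_Icc 0 1)
      (f' := fun t => f' (γ t) v)
    · exact fun t ht => (hφ t ht).continuousWithinAt
    · intro t ht
      rw [interior_Icc] at ht ⊢
      exact (hφ t (Set.Ioo_subset_Icc_self ht)).mono Set.Ioo_subset_Icc_self
    · intro t ht
      rw [interior_Icc] at ht
      exact hd (γ t) (hmem t (Set.Ioo_subset_Icc_self ht))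
  have h01 := hanti (Set.mem_Icc.2 ⟨le_refl 0, zero_le_one⟩)
    (Set.mem_Icc.2 ⟨zero_le_one, le_refl 1⟩) zero_le_one
  simpa [hγdef] using h01

/-- Decreasing marginal differences for `ψ(S) = G(x^S ∘ Y)` when `G` has
positive first partials and nonpositive mixed second partials on the
nonnegative orthant. -/
theorem gev_indicator_decreasing_differences (m : ℕ) (G : (Fin m → ℝ) → ℝ)
    (hdiff : ContDiffOn ℝ 2 G {Z : Fin m → ℝ | ∀ k, 0 ≤ Z k})
    (hGpos : ∀ Z : Fin m → ℝ, (∀ k, 0 ≤ Z k) → ∀ k : Fin m,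
      0 < fderivWithin ℝ G {W : Fin m → ℝ | ∀ k', 0 ≤ W k'} Z (Pi.single k 1))
    (hGmixed : ∀ Z : Fin m → ℝ, (∀ k, 0 ≤ Z k) → ∀ j k : Fin m, j ≠ k →
      fderivWithin ℝ
        (fun W => fderivWithin ℝ G {V : Fin m → ℝ | ∀ k', 0 ≤ V k'} W (Pi.single j 1))
        {V : Fin m → ℝ | ∀ k', 0 ≤ V k'} Z (Pi.single k 1) ≤ 0)
    (Y : Fin m → ℝ) (hY : ∀ k, 0 < Y k)
    (ψ : Finset (Fin m) → ℝ)
    (hψ : ∀ S : Finset (Fin m),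
      ψ S = G (fun j => (if j ∈ S then (1 : ℝ) else 0) * Y j)) :
    ∀ (A B : Finset (Fin m)), A ⊆ B → ∀ j : Fin m, j ∉ B →
      ψ (insert j B) - ψ B ≤ ψ (insert j A) - ψ A := by
  set C : Set (Fin m → ℝ) := {Z : Fin m → ℝ | ∀ k, 0 ≤ Z k} with hCdef
  have hCconv : Convex ℝ C := by
    intro x hx y hy a b ha hb hab
    intro k
    exact add_nonneg (mul_nonneg ha (hx k)) (mul_nonneg hb (hy k))
  have hCud : UniqueDiffOn ℝ C := by
    apply uniqueDiffOn_convex hCconv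
    refine ⟨fun _ => 1, ?_⟩
    have hopen : IsOpen {Z : Fin m → ℝ | ∀ k, 0 < Z k} := by
      have : {Z : Fin m → ℝ | ∀ k, 0 < Z k} = ⋂ k, (fun Z : Fin m → ℝ => Z k) ⁻¹' Set.Ioi 0 := by
        ext Z; simp
      rw [this]
      exact isOpen_iInter_of_finite fun k => isOpen_Ioi.preimage (continuous_apply k)
    apply interior_maximal _ hopen
    · exact fun _ => zero_lt_one
    · exact fun Z hZ k => (hZ k).le
  -- the single (indicator) vectors
  have hsingle_mem : ∀ (k : Fin m), (Y k • (Pi.single k 1 : Fin m → ℝ) : Fin m → ℝ) ∈ C := by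
    intro k i
    simp only [Pi.smul_apply, smul_eq_mul, Pi.single_apply]
    by_cases h : i = k <;> simp [h, (hY k).le]
  have hadd_mem : ∀ z ∈ C, ∀ k : Fin m, z + Y k • (Pi.single k 1 : Fin m → ℝ) ∈ C := by
    intro z hz k i
    exact add_nonneg (hz i) (hsingle_mem k i)
  -- the first derivative is C¹ on C
  have hG1 : DifferentiableOn ℝ G C := hdiff.differentiableOn (by norm_num)
  have hg'C1 : ContDiffOn ℝ 1 (fderivWithin ℝ G C) C :=
    hdiff.fderivWithin hCud (by norm_num)
  have hFkdiff : ∀ k : Fin m,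
      DifferentiableOn ℝ (fun W => fderivWithin ℝ G C W ((Pi.single k 1 : Fin m → ℝ))) C := by
    intro k
    exact (ContinuousLinearMap.apply ℝ ℝ ((Pi.single k 1 : Fin m → ℝ))).differentiable.comp_differentiableOn
      (hg'C1.differentiableOn one_ne_zero)
  -- the key single-swap inequality on G
  have step : ∀ u ∈ C, ∀ j k : Fin m, j ≠ k →
      G ((u + Y k • (Pi.single k 1 : Fin m → ℝ)) + Y j • (Pi.single j 1 : Fin m → ℝ)) - G (u + Y k • (Pi.single k 1 : Fin m → ℝ)) ≤
        G (u + Y j • (Pi.single j 1 : Fin m → ℝ)) - G u := by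
    intro u hu j k hjk
    set a : Fin m → ℝ := Y j • (Pi.single j 1 : Fin m → ℝ) with ha
    set b : Fin m → ℝ := Y k • (Pi.single k 1 : Fin m → ℝ) with hb
    set Fk : (Fin m → ℝ) → ℝ := fun W => fderivWithin ℝ G C W ((Pi.single k 1 : Fin m → ℝ)) with hFk
    -- inner monotonicity: Fk (z + a) ≤ Fk z for z ∈ C
    have inner : ∀ z ∈ C, Fk (z + a) ≤ Fk z := by
      intro z hz
      apply directional_nonpos_le C hCconv Fk (fun w => fderivWithin ℝ Fk C w) _ a _ z hz
        (hadd_mem z hz j)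
      · intro w hw
        exact ((hFkdiff k) w hw).hasFDerivWithinAt
      · intro w hw
        rw [ha, map_smul, smul_eq_mul]
        exact mul_nonpos_of_nonneg_of_nonpos (hY j).le (hGmixed w hw k j (Ne.symm hjk))
    -- outer monotonicity for f z = G (z + a) - G z in direction b
    have houter : ∀ z ∈ C, HasFDerivWithinAt (fun z => G (z + a) - G z)
        (fderivWithin ℝ G C (z + a) - fderivWithin ℝ G C z) C z := by
      intro z hz
      have hGz : HasFDerivWithinAt G (fderivWithin ℝ G C z) C z :=
        (hG1 z hz).hasFDerivWithinAt
      have hGza : HasFDerivWithinAt (fun z => G (z + a))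
          (fderivWithin ℝ G C (z + a)) C z := by
        have ht : HasFDerivWithinAt (fun z : Fin m → ℝ => z + a)
            (ContinuousLinearMap.id ℝ (Fin m → ℝ)) C z :=
          ((hasFDerivAt_id z).add_const a).hasFDerivWithinAt
        have hmaps : Set.MapsTo (fun z : Fin m → ℝ => z + a) C C := by
          intro w hw
          exact hadd_mem w hw j
        have := (hG1 (z + a) (hadd_mem z hz j)).hasFDerivWithinAt.comp z ht hmaps
        rw [ContinuousLinearMap.comp_id] at this
        exact this
      exact hGza.sub hGz
    have key := directional_nonpos_le C hCconv (fun z => G (z + a) - G z)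
      (fun z => fderivWithin ℝ G C (z + a) - fderivWithin ℝ G C z) houter b
      (fun z hz => by
        rw [ContinuousLinearMap.sub_apply, hb, map_smul, map_smul, smul_eq_mul, smul_eq_mul,
          ← mul_sub]
        exact mul_nonpos_of_nonneg_of_nonpos (hY k).le (sub_nonpos.2 (inner z hz)))
      u hu (hadd_mem u hu k)
    simpa using key
  -- the indicator vectors
  set vec : Finset (Fin m) → (Fin m → ℝ) :=
    fun S => (fun i => (if i ∈ S then (1:ℝ) else 0) * Y i) with hvec
  have hvecC : ∀ S, vec S ∈ C := by
    intro S i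
    by_cases h : i ∈ S <;> simp [hvec, h, (hY i).le]
  have hvecinsert : ∀ (S : Finset (Fin m)) (k : Fin m), k ∉ S →
      vec (insert k S) = vec S + Y k • (Pi.single k 1 : Fin m → ℝ) := by
    intro S k hk
    funext i
    simp only [hvec, Pi.add_apply, Pi.smul_apply, smul_eq_mul, Pi.single_apply]
    by_cases h : i = k
    · subst h
      simp [hk]
    · simp [h, Finset.mem_insert]
  -- single-step inequality for ψ
  have stepψ : ∀ (S : Finset (Fin m)) (j k : Fin m), j ∉ S → k ∉ S → j ≠ k →
      ψ (insert j (insert k S)) - ψ (insert k S) ≤ ψ (insert j S) - ψ S := by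
    intro S j k hjS hkS hjk
    have h1 : vec (insert k S) = vec S + Y k • (Pi.single k 1 : Fin m → ℝ) := hvecinsert S k hkS
    have h2 : vec (insert j S) = vec S + Y j • (Pi.single j 1 : Fin m → ℝ) := hvecinsert S j hjS
    have hjkS : j ∉ insert k S := by
      simp [Finset.mem_insert, hjk, hjS]
    have h3 : vec (insert j (insert k S)) =
        (vec S + Y k • (Pi.single k 1 : Fin m → ℝ)) + Y j • (Pi.single j 1 : Fin m → ℝ) := by
      rw [hvecinsert _ j hjkS, h1]
    have := step (vec S) (hvecC S) j k hjk
    rw [hψ (insert j (insert k S)), hψ (insert k S), hψ (insert j S), hψ S]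
    show G (vec (insert j (insert k S))) - G (vec (insert k S)) ≤
      G (vec (insert j S)) - G (vec S)
    rw [h1, h2, h3]
    exact this
  -- induct over the extra elements
  intro A B hAB j hjB
  have claim : ∀ D : Finset (Fin m), j ∉ A ∪ D →
      ψ (insert j (A ∪ D)) - ψ (A ∪ D) ≤ ψ (insert j A) - ψ A := by
    intro D
    induction D using Finset.induction with
    | empty => simp
    | @insert k D hkD IH =>
      intro hj
      by_cases hkA : k ∈ A
      · have hEq : A ∪ insert k D = A ∪ D := by
          rw [Finset.union_insert, Finset.insert_eq_self.2 (Finset.mem_union_left _ hkA)]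
        rw [hEq]
        exact IH (by rw [hEq] at hj; exact hj)
      · have hkAD : k ∉ A ∪ D := by simp [hkA, hkD]
        have hEq : A ∪ insert k D = insert k (A ∪ D) := Finset.union_insert k A D
        rw [hEq] at hj ⊢
        have hjk : j ≠ k := fun h => hj (by rw [h]; exact Finset.mem_insert_self k _)
        have hjAD : j ∉ A ∪ D := fun h => hj (Finset.mem_insert_of_mem h)
        exact le_trans (stepψ (A ∪ D) j k hjAD hkAD hjk) (IH hjAD)
  have hBeq : A ∪ (B \ A) = B := Finset.union_sdiff_of_subset hAB
  have := claim (B \ A) (by rw [hBeq]; exact hjB)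
  rw [hBeq] at this
  exact this
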